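/- Let H be a Hilbert space, f_1,...,f_n and h_1,...,h_n vectors with ⟨f_j, h_k⟩ = 0 for all j, k, such that the Gram matrices A = [⟨f_k, f_j⟩] and B = [⟨h_k, h_j⟩] are both nonsingular. Let U = span{f_j} and Ũ = span{f_j + h_j}. Then ‖P_U - P_Ũ‖² = λ_max(B(A+B)^{-1}), where λ_max denotes the largest eigenvalue. -/

import Mathlib

open scoped RealInnerProductSpace

namespace Stmt11Aux
open Matrix
variable {n : ℕ}

lemma symm_dot {C : Matrix (Fin n) (Fin n) ℝ} (hC : Cᵀ = C) (a b : Fin n → ℝ) :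
    a ⬝ᵥ C *ᵥ b = b ⬝ᵥ C *ᵥ a := by
  rw [dotProduct_mulVec, ← mulVec_transpose, hC, dotProduct_comm]

lemma dot_shift {C : Matrix (Fin n) (Fin n) ℝ} (hC : Cᵀ = C) (a b : Fin n → ℝ) :
    a ⬝ᵥ C *ᵥ b = (C *ᵥ a) ⬝ᵥ b := by
  rw [dotProduct_mulVec, ← mulVec_transpose, hC]

lemma herm_of_symm {C : Matrix (Fin n) (Fin n) ℝ} (hC : Cᵀ = C) : C.IsHermitian := by
  show _ = _
  ext i j
  rw [Matrix.conjTranspose_apply, star_trivial]; exact congrFun (congrFun hC i) j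

lemma symm_of_herm {C : Matrix (Fin n) (Fin n) ℝ} (hC : C.IsHermitian) : Cᵀ = C := by
  ext i j
  simpa [Matrix.conjTranspose_apply] using congrFun (congrFun hC i) j

lemma quad_le_of_eigenvalues_le {M : Matrix (Fin n) (Fin n) ℝ} (hM : M.IsHermitian) {c : ℝ}
    (hev : ∀ i, hM.eigenvalues i ≤ c) (t : Fin n → ℝ) :
    t ⬝ᵥ M *ᵥ t ≤ c * (t ⬝ᵥ t) := by
  set U : Matrix (Fin n) (Fin n) ℝ := (hM.eigenvectorUnitary : Matrix (Fin n) (Fin n) ℝ) with hU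
  have hUU : U * star U = 1 := Matrix.mem_unitaryGroup_iff.mp hM.eigenvectorUnitary.2
  set r : Fin n → ℝ := (star U) *ᵥ t with hr
  have shuffle : ∀ s : Fin n → ℝ, t ⬝ᵥ U *ᵥ s = r ⬝ᵥ s := by
    intro s
    rw [dotProduct_mulVec, hr]
    congr 1
    rw [← mulVec_transpose]
    rfl
  have hD : (Matrix.diagonal (RCLike.ofReal ∘ hM.eigenvalues) : Matrix (Fin n) (Fin n) ℝ)
      = Matrix.diagonal hM.eigenvalues := by
    congr 1
  have h1 : t ⬝ᵥ M *ᵥ t = r ⬝ᵥ (Matrix.diagonal hM.eigenvalues) *ᵥ r := by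
    conv_lhs => rw [hM.spectral_theorem, Unitary.conjStarAlgAut_apply]
    rw [← Matrix.mulVec_mulVec, ← Matrix.mulVec_mulVec, shuffle, hD]
  have h2 : t ⬝ᵥ t = r ⬝ᵥ r := by
    rw [hr, dotProduct_mulVec (star U *ᵥ t)]
    have : (star U *ᵥ t) ᵥ* star U = U *ᵥ (star U *ᵥ t) := by
      rw [← mulVec_transpose]; rfl
    rw [this, Matrix.mulVec_mulVec, hUU, Matrix.one_mulVec, dotProduct_comm]
  rw [h1, h2]
  simp only [Matrix.mulVec_diagonal, dotProduct, Finset.mul_sum]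
  apply Finset.sum_le_sum
  intro i _
  have : r i * (hM.eigenvalues i * r i) = hM.eigenvalues i * (r i * r i) := by ring
  rw [this]
  exact mul_le_mul_of_nonneg_right (hev i) (mul_self_nonneg _)

lemma hub_step {G B S M : Matrix (Fin n) (Fin n) ℝ}
    (hSS : S * S = G) (hSi : S * S⁻¹ = 1) (hiS : S⁻¹ * S = 1)
    (hGi : G⁻¹ * G = 1) (hMdef : M = S⁻¹ * B * S⁻¹)
    {lam : ℝ} {u : Fin n → ℝ} (hMu : M *ᵥ u = lam • u) (hune : u ≠ 0) :
    ∃ v : Fin n → ℝ, v ≠ 0 ∧ (B * G⁻¹) *ᵥ v = lam • v := by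
  refine ⟨S *ᵥ u, ?_, ?_⟩
  · intro h0
    apply hune
    have huu : S⁻¹ *ᵥ (S *ᵥ u) = u := by rw [mulVec_mulVec, hiS, one_mulVec]
    rw [← huu, h0, mulVec_zero]
  · have hw : G⁻¹ *ᵥ (S *ᵥ u) = S⁻¹ *ᵥ u := by
      have h1 : S *ᵥ u = G *ᵥ (S⁻¹ *ᵥ u) := by
        rw [mulVec_mulVec, ← hSS, Matrix.mul_assoc, hSi, Matrix.mul_one]
      rw [h1, mulVec_mulVec, mulVec_mulVec, hGi, Matrix.one_mul]
    have hBw : B *ᵥ (S⁻¹ *ᵥ u) = lam • (S *ᵥ u) := by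
      have h2 : B * S⁻¹ = S * M := by
        rw [hMdef, ← Matrix.mul_assoc, ← Matrix.mul_assoc, hSi, Matrix.one_mul]
      rw [mulVec_mulVec, h2, ← mulVec_mulVec, hMu, mulVec_smul]
    rw [← mulVec_mulVec, hw, hBw]

open scoped MatrixOrder in
/-- Core matrix lemma: if `c` dominates every eigenvalue of `B (A+B)⁻¹`, then
`B ≤ c (A+B)` as quadratic forms. -/
lemma key {A B : Matrix (Fin n) (Fin n) ℝ} (hA : A.PosDef) (hB : B.PosDef) {c : ℝ}
    (hub : ∀ r : ℝ, (∃ v : Fin n → ℝ, v ≠ 0 ∧ (B * (A + B)⁻¹) *ᵥ v = r • v) → r ≤ c)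
    (z : Fin n → ℝ) :
    z ⬝ᵥ B *ᵥ z ≤ c * (z ⬝ᵥ (A + B) *ᵥ z) := by
  have hG : (A + B).PosDef := hA.add hB
  set G := A + B with hGdef
  set S := CFC.sqrt G with hSdef
  have hS : S.PosSemidef := (CFC.sqrt_nonneg G).posSemidef
  have hSS : S * S = G := CFC.sqrt_mul_sqrt_self G hG.posSemidef.nonneg
  have hdetG : IsUnit G.det := isUnit_iff_ne_zero.mpr (ne_of_gt hG.det_pos)
  have hdetS : IsUnit S.det := by
    have h1 : S.det * S.det = G.det := by rw [← Matrix.det_mul, hSS]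
    exact isUnit_iff_ne_zero.mpr
      (fun h => (ne_of_gt hG.det_pos) (by rw [← h1, h, mul_zero]))
  have hSi : S * S⁻¹ = 1 := Matrix.mul_nonsing_inv S hdetS
  have hiS : S⁻¹ * S = 1 := Matrix.nonsing_inv_mul S hdetS
  have hGi : G⁻¹ * G = 1 := Matrix.nonsing_inv_mul G hdetG
  have hSsymm : Sᵀ = S := symm_of_herm hS.1
  have hSisymm : (S⁻¹)ᵀ = S⁻¹ := by rw [Matrix.transpose_nonsing_inv, hSsymm]
  set M := S⁻¹ * B * S⁻¹ with hMdef
  have hMsymm : Mᵀ = M := by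
    rw [hMdef, Matrix.transpose_mul, Matrix.transpose_mul, hSisymm,
      symm_of_herm hB.isHermitian]
    rw [Matrix.mul_assoc]
  have hMherm : M.IsHermitian := herm_of_symm hMsymm
  have hev : ∀ i, hMherm.eigenvalues i ≤ c := by
    intro i
    have hune : (⇑(hMherm.eigenvectorBasis i) : Fin n → ℝ) ≠ 0 := by
      intro h0
      exact hMherm.eigenvectorBasis.orthonormal.ne_zero i
        (by ext j; exact congrFun h0 j)
    exact hub _ (hub_step hSS hSi hiS hGi hMdef (hMherm.mulVec_eigenvectorBasis i) hune)
  set t : Fin n → ℝ := S *ᵥ z with ht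
  have hzt : S⁻¹ *ᵥ t = z := by rw [ht, Matrix.mulVec_mulVec, hiS, Matrix.one_mulVec]
  have e1 : z ⬝ᵥ B *ᵥ z = t ⬝ᵥ M *ᵥ t := by
    have hMt : M *ᵥ t = S⁻¹ *ᵥ (B *ᵥ z) := by
      rw [hMdef, ← Matrix.mulVec_mulVec, ← Matrix.mulVec_mulVec, hzt]
    rw [hMt, dot_shift hSisymm t, hzt]
  have e2 : z ⬝ᵥ G *ᵥ z = t ⬝ᵥ t := by
    have hGz : G *ᵥ z = S *ᵥ t := by rw [ht, Matrix.mulVec_mulVec, hSS]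
    rw [hGz, dot_shift hSsymm z, ← ht]
  calc z ⬝ᵥ B *ᵥ z = t ⬝ᵥ M *ᵥ t := e1
    _ ≤ c * (t ⬝ᵥ t) := quad_le_of_eigenvalues_le hMherm hev t
    _ = c * (z ⬝ᵥ G *ᵥ z) := by rw [e2]


lemma key2aux {A B : Matrix (Fin n) (Fin n) ℝ} (hAd : IsUnit A.det) (hBd : IsUnit B.det) :
    A⁻¹ * (B⁻¹ + A⁻¹)⁻¹ = (A + B)⁻¹ * B := by
  have hAi : A * A⁻¹ = 1 := Matrix.mul_nonsing_inv A hAd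
  have hiB : B⁻¹ * B = 1 := Matrix.nonsing_inv_mul B hBd
  have hI : B⁻¹ + A⁻¹ = B⁻¹ * ((A + B) * A⁻¹) := by
    rw [Matrix.add_mul, Matrix.mul_add, hAi, Matrix.mul_one,
      ← Matrix.mul_assoc, hiB, Matrix.one_mul]
  rw [hI, Matrix.mul_inv_rev, Matrix.mul_inv_rev, Matrix.nonsing_inv_nonsing_inv B hBd,
    Matrix.nonsing_inv_nonsing_inv A hAd, ← Matrix.mul_assoc, ← Matrix.mul_assoc,
    Matrix.nonsing_inv_mul A hAd, Matrix.one_mul]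

lemma key2sub {A B : Matrix (Fin n) (Fin n) ℝ} (hAd : IsUnit A.det) (hBd : IsUnit B.det)
    {c : ℝ}
    (hub : ∀ r : ℝ, (∃ v : Fin n → ℝ, v ≠ 0 ∧ (B * (A + B)⁻¹) *ᵥ v = r • v) → r ≤ c) :
    ∀ r : ℝ, (∃ v : Fin n → ℝ, v ≠ 0 ∧ (A⁻¹ * (B⁻¹ + A⁻¹)⁻¹) *ᵥ v = r • v) → r ≤ c := by
  rintro r ⟨v, hv, hvr⟩
  rw [key2aux hAd hBd] at hvr
  apply hub r
  refine ⟨B *ᵥ v, ?_, ?_⟩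
  · intro h0
    apply hv
    have : B⁻¹ *ᵥ (B *ᵥ v) = v := by
      rw [mulVec_mulVec, Matrix.nonsing_inv_mul B hBd, one_mulVec]
    rw [← this, h0, mulVec_zero]
  · have : (B * (A + B)⁻¹) *ᵥ (B *ᵥ v) = B *ᵥ (((A + B)⁻¹ * B) *ᵥ v) := by
      rw [mulVec_mulVec, mulVec_mulVec, Matrix.mul_assoc]
    rw [this, hvr, mulVec_smul]

lemma exists_gen {A B : Matrix (Fin n) (Fin n) ℝ} {c : ℝ}
    (hGd : IsUnit (A + B).det)
    (hex : ∃ v : Fin n → ℝ, v ≠ 0 ∧ (B * (A + B)⁻¹) *ᵥ v = c • v) :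
    ∃ z : Fin n → ℝ, z ≠ 0 ∧ B *ᵥ z = c • ((A + B) *ᵥ z) := by
  obtain ⟨v, hv, hvr⟩ := hex
  refine ⟨(A + B)⁻¹ *ᵥ v, ?_, ?_⟩
  · intro h0
    apply hv
    have h1 : (A + B) *ᵥ ((A + B)⁻¹ *ᵥ v) = v := by
      rw [mulVec_mulVec, Matrix.mul_nonsing_inv _ hGd, one_mulVec]
    rw [← h1, h0, mulVec_zero]
  · have h1 : (A + B) *ᵥ ((A + B)⁻¹ *ᵥ v) = v := by
      rw [mulVec_mulVec, Matrix.mul_nonsing_inv _ hGd, one_mulVec]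
    rw [← mulVec_mulVec] at hvr
    rw [hvr, h1]


section hilbert
variable {H : Type*} [NormedAddCommGroup H] [InnerProductSpace ℝ H] {n : ℕ}

lemma inner_sum_smul (g g' : Fin n → H) (x y : Fin n → ℝ) :
    ⟪∑ j, x j • g j, ∑ k, y k • g' k⟫ = ∑ j, ∑ k, x j * y k * ⟪g j, g' k⟫ := by
  rw [sum_inner]
  apply Finset.sum_congr rfl
  intro j _
  rw [real_inner_smul_left, inner_sum, Finset.mul_sum]
  apply Finset.sum_congr rfl
  intro k _
  rw [real_inner_smul_right]
  ring

lemma gram_dot {g : Fin n → H} {C : Matrix (Fin n) (Fin n) ℝ}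
    (hC : ∀ j l, C j l = ⟪g l, g j⟫) (x y : Fin n → ℝ) :
    ⟪∑ j, x j • g j, ∑ k, y k • g k⟫ = y ⬝ᵥ C *ᵥ x := by
  rw [inner_sum_smul, Finset.sum_comm]
  apply Finset.sum_congr rfl
  intro k _
  rw [Matrix.mulVec, dotProduct, Finset.mul_sum]
  apply Finset.sum_congr rfl
  intro j _
  rw [hC k j]
  ring

lemma cross_zero {g g' : Fin n → H} (horth : ∀ j l, ⟪g j, g' l⟫ = 0) (x y : Fin n → ℝ) :
    ⟪∑ j, x j • g j, ∑ k, y k • g' k⟫ = 0 := by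
  rw [inner_sum_smul]
  simp [horth]

lemma inner_single {g : Fin n → H} {C : Matrix (Fin n) (Fin n) ℝ}
    (hC : ∀ j l, C j l = ⟪g l, g j⟫) (hCs : Cᵀ = C) (x : Fin n → ℝ) (k : Fin n) :
    ⟪g k, ∑ j, x j • g j⟫ = (C *ᵥ x) k := by
  rw [inner_sum, Matrix.mulVec, dotProduct]
  apply Finset.sum_congr rfl
  intro j _
  rw [real_inner_smul_right]
  have h1 : C k j = C j k := (congrFun (congrFun hCs k) j).symm
  rw [h1, hC j k]
  ring

lemma inner_single_cross {g g' : Fin n → H} (horth : ∀ j l, ⟪g j, g' l⟫ = 0)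
    (y : Fin n → ℝ) (k : Fin n) :
    ⟪g k, ∑ j, y j • g' j⟫ = 0 := by
  rw [inner_sum]
  simp [real_inner_smul_right, horth]

lemma normsq_sum {g g' : Fin n → H} {C D : Matrix (Fin n) (Fin n) ℝ}
    (hC : ∀ j l, C j l = ⟪g l, g j⟫) (hD : ∀ j l, D j l = ⟪g' l, g' j⟫)
    (horth : ∀ j l, ⟪g j, g' l⟫ = 0) (x y : Fin n → ℝ) :
    ‖(∑ j, x j • g j) + ∑ j, y j • g' j‖ ^ 2 = x ⬝ᵥ C *ᵥ x + y ⬝ᵥ D *ᵥ y := by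
  rw [norm_add_sq_real, ← real_inner_self_eq_norm_sq, ← real_inner_self_eq_norm_sq,
    gram_dot hC, gram_dot hD, cross_zero horth]
  ring

lemma proj_eq {K : Submodule ℝ H} {v p q : H} (hp : p ∈ K)
    (hvp : ∀ w ∈ K, ⟪v - p, w⟫ = 0) (hq : q ∈ K)
    (hvq : ∀ w ∈ K, ⟪v - q, w⟫ = 0) : p = q := by
  have h1 := hvp _ (K.sub_mem hp hq)
  have h2 := hvq _ (K.sub_mem hp hq)
  have h3 : (⟪v - q, p - q⟫ : ℝ) - ⟪v - p, p - q⟫ = ⟪p - q, p - q⟫ := by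
    rw [← inner_sub_left]
    congr 1
    abel
  have h4 : (⟪p - q, p - q⟫ : ℝ) = 0 := by rw [← h3, h1, h2, sub_zero]
  have h5 : p - q = 0 := by
    have := inner_self_eq_zero (𝕜 := ℝ) (x := p - q)
    exact this.mp h4
  exact sub_eq_zero.mp h5


end hilbert
end Stmt11Aux

/-- For vectors `f j ⊥ h l` with nonsingular Gram matrices `A = [⟪f k, f j⟫]` and
`B = [⟪h k, h j⟫]`, the orthogonal projections `P` onto `U = span{f j}` and `Q` onto
`Ũ = span{f j + h j}` satisfy `‖P - Q‖² = λ_max(B (A + B)⁻¹)`. -/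
theorem stmt_11 {H : Type*} [NormedAddCommGroup H] [InnerProductSpace ℝ H]
    {n : ℕ} (f h : Fin n → H) (horth : ∀ j l : Fin n, ⟪f j, h l⟫ = 0)
    (A B : Matrix (Fin n) (Fin n) ℝ)
    (hA : ∀ j l : Fin n, A j l = ⟪f l, f j⟫) (hB : ∀ j l : Fin n, B j l = ⟪h l, h j⟫)
    (hAu : IsUnit A.det) (hBu : IsUnit B.det)
    (P Q : H →L[ℝ] H)
    (hP : ∀ v : H, P v ∈ Submodule.span ℝ (Set.range f) ∧
      ∀ w ∈ Submodule.span ℝ (Set.range f), ⟪v - P v, w⟫ = 0)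
    (hQ : ∀ v : H, Q v ∈ Submodule.span ℝ (Set.range fun j : Fin n => f j + h j) ∧
      ∀ w ∈ Submodule.span ℝ (Set.range fun j : Fin n => f j + h j), ⟪v - Q v, w⟫ = 0)
    (c : ℝ)
    (hc : IsGreatest
      {r : ℝ | ∃ v : Fin n → ℝ, v ≠ 0 ∧ (B * (A + B)⁻¹).mulVec v = r • v} c) :
    ‖P - Q‖ ^ 2 = c := by
  classical
  open Matrix Stmt11Aux in
  -- symmetry
  have hAsymm : Aᵀ = A := by
    ext j l
    rw [Matrix.transpose_apply, hA, hA, real_inner_comm]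
  have hBsymm : Bᵀ = B := by
    ext j l
    rw [Matrix.transpose_apply, hB, hB, real_inner_comm]
  have horth' : ∀ j l : Fin n, ⟪h j, f l⟫ = 0 := fun j l => by
    rw [real_inner_comm]; exact horth l j
  -- coefficient vanishing
  have hfcoef : ∀ x : Fin n → ℝ, (∑ j, x j • f j) = 0 → x = 0 := by
    intro x hx0
    have hAx : A *ᵥ x = 0 := by
      funext k
      rw [← inner_single hA hAsymm x k, hx0, inner_zero_right]
      rfl
    have : A⁻¹ *ᵥ (A *ᵥ x) = x := by
      rw [Matrix.mulVec_mulVec, Matrix.nonsing_inv_mul A hAu, Matrix.one_mulVec]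
    rw [← this, hAx, Matrix.mulVec_zero]
  have hhcoef : ∀ y : Fin n → ℝ, (∑ j, y j • h j) = 0 → y = 0 := by
    intro y hy0
    have hBy : B *ᵥ y = 0 := by
      funext k
      rw [← inner_single hB hBsymm y k, hy0, inner_zero_right]
      rfl
    have : B⁻¹ *ᵥ (B *ᵥ y) = y := by
      rw [Matrix.mulVec_mulVec, Matrix.nonsing_inv_mul B hBu, Matrix.one_mulVec]
    rw [← this, hBy, Matrix.mulVec_zero]
  -- positive definiteness
  have hApd : A.PosDef := by
    refine Matrix.PosDef.of_dotProduct_mulVec_pos (herm_of_symm hAsymm) ?_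
    intro x hx
    have hst : star x = x := by funext i; exact star_trivial _
    rw [hst]
    have hgd : x ⬝ᵥ A *ᵥ x = ⟪∑ j, x j • f j, ∑ j, x j • f j⟫ := (gram_dot hA x x).symm
    show (0 : ℝ) < x ⬝ᵥ A *ᵥ x
    rw [hgd]
    rcases lt_or_eq_of_le (real_inner_self_nonneg (x := ∑ j, x j • f j)) with hlt | heq
    · exact hlt
    · exfalso
      exact hx (hfcoef x (inner_self_eq_zero.mp heq.symm))
  have hBpd : B.PosDef := by
    refine Matrix.PosDef.of_dotProduct_mulVec_pos (herm_of_symm hBsymm) ?_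
    intro y hy
    have hst : star y = y := by funext i; exact star_trivial _
    rw [hst]
    have hgd : y ⬝ᵥ B *ᵥ y = ⟪∑ j, y j • h j, ∑ j, y j • h j⟫ := (gram_dot hB y y).symm
    show (0 : ℝ) < y ⬝ᵥ B *ᵥ y
    rw [hgd]
    rcases lt_or_eq_of_le (real_inner_self_nonneg (x := ∑ j, y j • h j)) with hlt | heq
    · exact hlt
    · exfalso
      exact hy (hhcoef y (inner_self_eq_zero.mp heq.symm))
  have hGpd : (A + B).PosDef := hApd.add hBpd
  have hGd : IsUnit (A + B).det := isUnit_iff_ne_zero.mpr (ne_of_gt hGpd.det_pos)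
  have hGsymm : (A + B)ᵀ = A + B := by rw [Matrix.transpose_add, hAsymm, hBsymm]
  -- the `hub` hypothesis from `hc`
  have hub : ∀ r : ℝ, (∃ v : Fin n → ℝ, v ≠ 0 ∧ (B * (A + B)⁻¹) *ᵥ v = r • v) → r ≤ c :=
    fun r hr => hc.2 hr
  -- the extremal generalized eigenvector
  obtain ⟨z₀, hz₀ne, hz₀⟩ := exists_gen hGd hc.1
  have hgpos : 0 < z₀ ⬝ᵥ (A + B) *ᵥ z₀ := by
    have := hGpd.dotProduct_mulVec_pos hz₀ne
    have hst : star z₀ = z₀ := by funext i; exact star_trivial _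
    rwa [hst] at this
  have hcg : z₀ ⬝ᵥ B *ᵥ z₀ = c * (z₀ ⬝ᵥ (A + B) *ᵥ z₀) := by
    rw [hz₀, dotProduct_smul]
    rfl
  have hcpos : 0 < c := by
    have hBpos : 0 < z₀ ⬝ᵥ B *ᵥ z₀ := by
      have := hBpd.dotProduct_mulVec_pos hz₀ne
      have hst : star z₀ = z₀ := by funext i; exact star_trivial _
      rwa [hst] at this
    by_contra hcn
    push_neg at hcn
    nlinarith
  have hc0 : (0 : ℝ) ≤ c := le_of_lt hcpos
  -- membership helpers
  have hfspan : ∀ k, f k ∈ Submodule.span ℝ (Set.range f) :=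
    fun k => Submodule.subset_span ⟨k, rfl⟩
  have hfhspan : ∀ k, f k + h k ∈ Submodule.span ℝ (Set.range fun j : Fin n => f j + h j) :=
    fun k => Submodule.subset_span ⟨k, rfl⟩
  -- upper bound pointwise
  have upper : ∀ w : H, ‖(P - Q) w‖ ^ 2 ≤ c * ‖w‖ ^ 2 := by
    intro w
    obtain ⟨x, hx⟩ := (Submodule.mem_span_range_iff_exists_fun (R := ℝ)).mp (hP w).1
    obtain ⟨z, hz⟩ := (Submodule.mem_span_range_iff_exists_fun (R := ℝ)).mp (hQ w).1
    have hsplit : (∑ j, z j • (f j + h j)) = (∑ j, z j • f j) + ∑ j, z j • h j := by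
      rw [← Finset.sum_add_distrib]
      apply Finset.sum_congr rfl
      intro j _
      rw [smul_add]
    have ha : ∀ k, (A *ᵥ x) k = ⟪f k, w⟫ := by
      intro k
      have h1 := (hP w).2 (f k) (hfspan k)
      rw [inner_sub_left] at h1
      rw [← inner_single hA hAsymm x k, hx]
      linarith [real_inner_comm (f k) w, real_inner_comm (f k) (P w)]
    have hg : ∀ k, ((A + B) *ᵥ z) k = ⟪f k + h k, w⟫ := by
      intro k
      have h1 := (hQ w).2 (f k + h k) (hfhspan k)
      rw [inner_sub_left] at h1
      have h2 : ⟪f k + h k, Q w⟫ = ((A + B) *ᵥ z) k := by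
        rw [← hz, hsplit, inner_add_left, inner_add_right, inner_add_right,
          inner_single hA hAsymm, inner_single hB hBsymm,
          inner_single_cross horth, inner_single_cross horth',
          Matrix.add_mulVec]
        simp [Matrix.mulVec]
      rw [← h2]
      linarith [real_inner_comm (f k + h k) w, real_inner_comm (f k + h k) (Q w)]
    set y : Fin n → ℝ := B⁻¹ *ᵥ ((A + B) *ᵥ z - A *ᵥ x) with hydef
    have hBy : B *ᵥ y = (A + B) *ᵥ z - A *ᵥ x := by
      rw [hydef, Matrix.mulVec_mulVec, Matrix.mul_nonsing_inv B hBu, Matrix.one_mulVec]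
    have hb : ∀ k, (B *ᵥ y) k = ⟪h k, w⟫ := by
      intro k
      rw [hBy]
      have h1 : ⟪h k, w⟫ = ⟪f k + h k, w⟫ - ⟪f k, w⟫ := by
        rw [inner_add_left]; ring
      rw [h1, ← ha, ← hg]
      rfl
    set w₀ : H := (∑ j, x j • f j) + ∑ j, y j • h j with hw₀def
    have hperpf : ∀ k, ⟪w - w₀, f k⟫ = 0 := by
      intro k
      have e : ⟪f k, w₀⟫ = ⟪f k, w⟫ := by
        rw [hw₀def, inner_add_right, inner_single hA hAsymm, inner_single_cross horth,
          add_zero, ha]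
      rw [inner_sub_left]
      linarith [real_inner_comm w (f k), real_inner_comm w₀ (f k), e]
    have hperph : ∀ k, ⟪w - w₀, h k⟫ = 0 := by
      intro k
      have e : ⟪h k, w₀⟫ = ⟪h k, w⟫ := by
        rw [hw₀def, inner_add_right, inner_single hB hBsymm, inner_single_cross horth',
          zero_add, hb]
      rw [inner_sub_left]
      linarith [real_inner_comm w (h k), real_inner_comm w₀ (h k), e]
    have hw0orth : ⟪w - w₀, w₀⟫ = 0 := by
      have h1 : ⟪w - w₀, ∑ j, x j • f j⟫ = 0 := by
        rw [inner_sum]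
        simp [real_inner_smul_right, hperpf]
      have h2 : ⟪w - w₀, ∑ j, y j • h j⟫ = 0 := by
        rw [inner_sum]
        simp [real_inner_smul_right, hperph]
      have h3 : ⟪w - w₀, w₀⟫ = ⟪w - w₀, ∑ j, x j • f j⟫ + ⟪w - w₀, ∑ j, y j • h j⟫ := by
        rw [← inner_add_right, ← hw₀def]
      rw [h3, h1, h2, add_zero]
    have hwnorm : ‖w₀‖ ^ 2 ≤ ‖w‖ ^ 2 := by
      have hsum : w = (w - w₀) + w₀ := by abel
      calc ‖w₀‖ ^ 2 ≤ ‖w - w₀‖ ^ 2 + 2 * ⟪w - w₀, w₀⟫ + ‖w₀‖ ^ 2 := by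
            rw [hw0orth]
            nlinarith [sq_nonneg ‖w - w₀‖]
        _ = ‖(w - w₀) + w₀‖ ^ 2 := (norm_add_sq_real _ _).symm
        _ = ‖w‖ ^ 2 := by rw [← hsum]
    have hw0n : ‖w₀‖ ^ 2 = x ⬝ᵥ A *ᵥ x + y ⬝ᵥ B *ᵥ y := by
      rw [hw₀def]
      exact normsq_sum hA hB horth x y
    have hPQ : (P - Q) w = (∑ j, (x - z) j • f j) + ∑ j, (-z) j • h j := by
      have e1 : (∑ j, (x - z) j • f j) = (∑ j, x j • f j) - ∑ j, z j • f j := by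
        rw [← Finset.sum_sub_distrib]
        apply Finset.sum_congr rfl
        intro j _
        rw [Pi.sub_apply, sub_smul]
      have e2 : (∑ j, (-z) j • h j) = -∑ j, z j • h j := by
        rw [← Finset.sum_neg_distrib]
        apply Finset.sum_congr rfl
        intro j _
        rw [Pi.neg_apply, neg_smul]
      rw [ContinuousLinearMap.sub_apply, ← hx, ← hz, hsplit, e1, e2]
      abel
    have hPQn : ‖(P - Q) w‖ ^ 2 = (x - z) ⬝ᵥ A *ᵥ (x - z) + z ⬝ᵥ B *ᵥ z := by
      rw [hPQ, normsq_sum hA hB horth (x - z) (-z)]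
      have e5 : (-z) ⬝ᵥ B *ᵥ (-z) = z ⬝ᵥ B *ᵥ z := by
        rw [Matrix.mulVec_neg, dotProduct_neg, neg_dotProduct, neg_neg]
      rw [e5]
    -- matrix inequality
    set s : Fin n → ℝ := x - z with hsdef
    set u : Fin n → ℝ := A *ᵥ s with hudef
    have key1 := key hApd hBpd hub z
    have key2' := key (Matrix.PosDef.inv hBpd) (Matrix.PosDef.inv hApd)
        (key2sub hAu hBu hub) u
    have hAiu : A⁻¹ *ᵥ u = s := by
      rw [hudef, Matrix.mulVec_mulVec, Matrix.nonsing_inv_mul A hAu, Matrix.one_mulVec]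
    have e3 : u ⬝ᵥ A⁻¹ *ᵥ u = s ⬝ᵥ A *ᵥ s := by
      rw [hAiu, hudef, dotProduct_comm]
    have e4 : u ⬝ᵥ (B⁻¹ + A⁻¹) *ᵥ u = u ⬝ᵥ B⁻¹ *ᵥ u + s ⬝ᵥ A *ᵥ s := by
      rw [Matrix.add_mulVec, dotProduct_add, e3]
    rw [e3, e4] at key2'
    have hBd : B *ᵥ (B⁻¹ *ᵥ u) = u := by
      rw [Matrix.mulVec_mulVec, Matrix.mul_nonsing_inv B hBu, Matrix.one_mulVec]
    have hy2 : y = z - B⁻¹ *ᵥ u := by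
      rw [hydef]
      have e6 : (A + B) *ᵥ z - A *ᵥ x = B *ᵥ z - u := by
        rw [Matrix.add_mulVec, hudef, hsdef, Matrix.mulVec_sub]
        abel
      rw [e6, Matrix.mulVec_sub, Matrix.mulVec_mulVec, Matrix.nonsing_inv_mul B hBu,
        Matrix.one_mulVec]
    have hxz : x = z + s := by rw [hsdef, add_sub_cancel]
    have E1 : (z + s) ⬝ᵥ A *ᵥ (z + s)
        = z ⬝ᵥ A *ᵥ z + 2 * (z ⬝ᵥ A *ᵥ s) + s ⬝ᵥ A *ᵥ s := by
      rw [Matrix.mulVec_add, dotProduct_add, add_dotProduct, add_dotProduct,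
        symm_dot hAsymm s z]
      ring
    have E2 : (z - B⁻¹ *ᵥ u) ⬝ᵥ B *ᵥ (z - B⁻¹ *ᵥ u)
        = z ⬝ᵥ B *ᵥ z - 2 * (z ⬝ᵥ A *ᵥ s) + u ⬝ᵥ B⁻¹ *ᵥ u := by
      rw [Matrix.mulVec_sub, dotProduct_sub, sub_dotProduct, sub_dotProduct, hBd]
      rw [symm_dot hBsymm (B⁻¹ *ᵥ u) z, hBd, dotProduct_comm (B⁻¹ *ᵥ u) u]
      ring
    have E3 : z ⬝ᵥ (A + B) *ᵥ z = z ⬝ᵥ A *ᵥ z + z ⬝ᵥ B *ᵥ z := by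
      rw [Matrix.add_mulVec, dotProduct_add]
    have I1 : x ⬝ᵥ A *ᵥ x + y ⬝ᵥ B *ᵥ y
        = z ⬝ᵥ (A + B) *ᵥ z + (s ⬝ᵥ A *ᵥ s + u ⬝ᵥ B⁻¹ *ᵥ u) := by
      rw [hxz, hy2, E1, E2, E3]
      ring
    rw [hPQn]
    calc s ⬝ᵥ A *ᵥ s + z ⬝ᵥ B *ᵥ z
        ≤ c * (u ⬝ᵥ B⁻¹ *ᵥ u + s ⬝ᵥ A *ᵥ s) + c * (z ⬝ᵥ (A + B) *ᵥ z) :=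
          add_le_add key2' key1
      _ = c * (x ⬝ᵥ A *ᵥ x + y ⬝ᵥ B *ᵥ y) := by rw [I1]; ring
      _ = c * ‖w₀‖ ^ 2 := by rw [hw0n]
      _ ≤ c * ‖w‖ ^ 2 := mul_le_mul_of_nonneg_left hwnorm hc0
  -- lower bound vector
  set v : H := (∑ j, z₀ j • f j) + ∑ j, z₀ j • h j with hvdef
  have hvsplit : (∑ j, z₀ j • (f j + h j)) = v := by
    rw [hvdef, ← Finset.sum_add_distrib]
    apply Finset.sum_congr rfl
    intro j _
    rw [smul_add]
  have hvmem : v ∈ Submodule.span ℝ (Set.range fun j : Fin n => f j + h j) := by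
    rw [← hvsplit]
    exact Submodule.sum_mem _
      (fun j _ => Submodule.smul_mem _ _ (Submodule.subset_span ⟨j, rfl⟩))
  have hQv : Q v = v := by
    apply proj_eq (hQ v).1 (hQ v).2 hvmem
    intro w' hw'
    rw [sub_self, inner_zero_left]
  have hfmem : (∑ j, z₀ j • f j) ∈ Submodule.span ℝ (Set.range f) :=
    Submodule.sum_mem _
      (fun j _ => Submodule.smul_mem _ _ (Submodule.subset_span ⟨j, rfl⟩))
  have hPv : P v = ∑ j, z₀ j • f j := by
    apply proj_eq (hP v).1 (hP v).2 hfmem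
    intro w' hw'
    obtain ⟨d, hd⟩ := (Submodule.mem_span_range_iff_exists_fun (R := ℝ)).mp hw'
    have hvp : v - ∑ j, z₀ j • f j = ∑ j, z₀ j • h j := by
      rw [hvdef]
      abel
    rw [hvp, ← hd]
    exact cross_zero horth' z₀ d
  have hPQv : (P - Q) v = -∑ j, z₀ j • h j := by
    rw [ContinuousLinearMap.sub_apply, hPv, hQv, hvdef]
    abel
  have hPQvn : ‖(P - Q) v‖ ^ 2 = c * (z₀ ⬝ᵥ (A + B) *ᵥ z₀) := by
    rw [hPQv, norm_neg, ← real_inner_self_eq_norm_sq, gram_dot hB z₀ z₀, hcg]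
  have hvn : ‖v‖ ^ 2 = z₀ ⬝ᵥ (A + B) *ᵥ z₀ := by
    rw [hvdef, normsq_sum hA hB horth z₀ z₀, Matrix.add_mulVec, dotProduct_add]
  -- conclusion
  have hle : ‖P - Q‖ ≤ Real.sqrt c := by
    apply ContinuousLinearMap.opNorm_le_bound _ (Real.sqrt_nonneg c)
    intro w
    have h2 := upper w
    calc ‖(P - Q) w‖ = Real.sqrt (‖(P - Q) w‖ ^ 2) := (Real.sqrt_sq (norm_nonneg _)).symm
      _ ≤ Real.sqrt (c * ‖w‖ ^ 2) := Real.sqrt_le_sqrt h2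
      _ = Real.sqrt c * ‖w‖ := by
          rw [Real.sqrt_mul hc0, Real.sqrt_sq (norm_nonneg w)]
  have hge : Real.sqrt c ≤ ‖P - Q‖ := by
    have h1 := (P - Q).le_opNorm v
    have hnv : ‖v‖ = Real.sqrt (z₀ ⬝ᵥ (A + B) *ᵥ z₀) := by
      rw [← Real.sqrt_sq (norm_nonneg v), hvn]
    have hnPQ : ‖(P - Q) v‖ = Real.sqrt c * Real.sqrt (z₀ ⬝ᵥ (A + B) *ᵥ z₀) := by
      rw [← Real.sqrt_sq (norm_nonneg ((P - Q) v)), hPQvn, Real.sqrt_mul hc0]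
    rw [hnv, hnPQ] at h1
    exact le_of_mul_le_mul_right h1 (Real.sqrt_pos.mpr hgpos)
  have hfin : ‖P - Q‖ = Real.sqrt c := le_antisymm hle hge
  rw [hfin, Real.sq_sqrt hc0]
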